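/- arXiv:1409.5884 — 2 statements merged into one kernel-verified Lean document; each statement's English description precedes it below -/
import Mathlib

section
/- Let M be a real symmetric p×p matrix, ρ an eigenvalue of M with unit eigenvector e, and Λ ∈ ℝᵖ nonzero with ⟨e, Λ⟩ > 0 and ⟨Λ, MΛ⟩ > ρ|Λ|². Define q(t) = ⟨Λ(t), M Λ(t)⟩ where Λ(t) = (|Λ|/|N(t)|)N(t) and N(t) = (1-t)Λ + t|Λ|e. Then q is differentiable at t = 0 and q'(0) = -2⟨e,Λ⟩(⟨Λ,MΛ⟩ - ρ|Λ|²)/|Λ| < 0. -/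
private lemma symm_inner_aux (p : ℕ) (M : Matrix (Fin p) (Fin p) ℝ) (hM : M.IsSymm)
    (x y : EuclideanSpace ℝ (Fin p)) :
    (inner ℝ x ((WithLp.toLp 2 (M.mulVec y)) : EuclideanSpace ℝ (Fin p)) : ℝ)
      = @inner ℝ (EuclideanSpace ℝ (Fin p)) _ ((WithLp.toLp 2 (M.mulVec x)) : EuclideanSpace ℝ (Fin p)) y := by
  simp only [EuclideanSpace.inner_eq_star_dotProduct, star_trivial]
  rw [dotProduct_comm (M.mulVec _), dotProduct_comm y.ofLp]
  show dotProduct (x : Fin p → ℝ) (M.mulVec y) = dotProduct (M.mulVec x) (y : Fin p → ℝ)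
  rw [Matrix.dotProduct_mulVec, ← Matrix.mulVec_transpose, hM.eq, dotProduct_comm]

private lemma quad_deriv_aux (a0 a1 a2 : ℝ) :
    HasDerivAt (fun t : ℝ => a0 + a1*t + a2*t^2) a1 0 := by
  have h := (((hasDerivAt_id (0:ℝ)).const_mul a1).add
    ((hasDerivAt_pow 2 (0:ℝ)).const_mul a2)).const_add a0
  simpa [add_assoc] using h

theorem quadratic_form_path_deriv (p : ℕ) (M : Matrix (Fin p) (Fin p) ℝ)
    (hM : M.IsSymm) (ρ : ℝ) (e : EuclideanSpace ℝ (Fin p))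
    (he : M.mulVec e = ρ • (e : Fin p → ℝ)) (hne : ‖e‖ = 1)
    (Λ : EuclideanSpace ℝ (Fin p)) (hΛ : Λ ≠ 0)
    (hpos : (0:ℝ) < inner ℝ e Λ)
    (hq : ρ * ‖Λ‖ ^ 2 < (inner ℝ Λ ((WithLp.toLp 2 (M.mulVec Λ) : EuclideanSpace ℝ (Fin p))) : ℝ)) :
    HasDerivAt (fun t : ℝ =>
        (inner ℝ ((‖Λ‖ / ‖((1 - t) • Λ + (t * ‖Λ‖) • e : EuclideanSpace ℝ (Fin p))‖) •
            ((1 - t) • Λ + (t * ‖Λ‖) • e))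
          ((WithLp.toLp 2 (M.mulVec ((‖Λ‖ / ‖((1 - t) • Λ + (t * ‖Λ‖) • e : EuclideanSpace ℝ (Fin p))‖) •
            ((1 - t) • Λ + (t * ‖Λ‖) • e))) : EuclideanSpace ℝ (Fin p))) : ℝ))
      (-2 * (inner ℝ e Λ : ℝ) *
        ((inner ℝ Λ ((WithLp.toLp 2 (M.mulVec Λ) : EuclideanSpace ℝ (Fin p))) : ℝ) - ρ * ‖Λ‖ ^ 2) / ‖Λ‖) 0 ∧
    -2 * (inner ℝ e Λ : ℝ) *
        ((inner ℝ Λ ((WithLp.toLp 2 (M.mulVec Λ) : EuclideanSpace ℝ (Fin p))) : ℝ) - ρ * ‖Λ‖ ^ 2) / ‖Λ‖ < 0 := by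
  have hr0 : (0:ℝ) < ‖Λ‖ := norm_pos_iff.mpr hΛ
  set r : ℝ := ‖Λ‖ with hrdef
  set c : ℝ := inner ℝ e Λ with hcdef
  set a : ℝ := (inner ℝ Λ (((WithLp.toLp 2 (M.mulVec Λ)) : EuclideanSpace ℝ (Fin p))) : ℝ) with hadef
  -- the path
  set N : ℝ → EuclideanSpace ℝ (Fin p) := fun t => (1 - t) • Λ + (t * r) • e with hN
  -- polynomials
  set P : ℝ → ℝ := fun t => a + (2*r*ρ*c - 2*a)*t + (a - 2*r*ρ*c + ρ*r^2)*t^2 with hP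
  set Q : ℝ → ℝ := fun t => r^2 + (2*r*c - 2*r^2)*t + (2*r^2 - 2*r*c)*t^2 with hQ
  -- basic inner ℝ product facts
  have hee : (inner ℝ e e : ℝ) = 1 := by
    rw [real_inner_self_eq_norm_sq, hne]; norm_num
  have hle : (inner ℝ Λ e : ℝ) = c := (real_inner_comm Λ e).symm
  have hΛMe : (inner ℝ Λ (((WithLp.toLp 2 (M.mulVec e)) : EuclideanSpace ℝ (Fin p))) : ℝ) = ρ * c := by
    rw [he]
    show (inner ℝ Λ (ρ • e) : ℝ) = ρ * c
    rw [real_inner_smul_right, hle]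
  have heMΛ : (inner ℝ e (((WithLp.toLp 2 (M.mulVec Λ)) : EuclideanSpace ℝ (Fin p))) : ℝ) = ρ * c := by
    rw [symm_inner_aux p M hM e Λ, he]
    show (inner ℝ (ρ • e) Λ : ℝ) = ρ * c
    rw [real_inner_smul_left, hcdef]
  have heMe : (inner ℝ e (((WithLp.toLp 2 (M.mulVec e)) : EuclideanSpace ℝ (Fin p))) : ℝ) = ρ := by
    rw [he]
    show (inner ℝ e (ρ • e) : ℝ) = ρ
    rw [real_inner_smul_right, hee, mul_one]
  -- expansion of the quadratic form along N
  have hBN : ∀ t : ℝ, (inner ℝ (N t) (((WithLp.toLp 2 (M.mulVec (N t))) : EuclideanSpace ℝ (Fin p))) : ℝ) = P t := by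
    intro t
    have hmv : (M.mulVec (N t) : Fin p → ℝ)
        = (1 - t) • (M.mulVec Λ) + (t * r) • (M.mulVec e) := by
      show M.mulVec ((1 - t) • (Λ : Fin p → ℝ) + (t * r) • (e : Fin p → ℝ)) = _
      rw [Matrix.mulVec_add, Matrix.mulVec_smul, Matrix.mulVec_smul]
    show (inner ℝ ((1 - t) • Λ + (t * r) • e)
        (((WithLp.toLp 2 (M.mulVec (N t))) : EuclideanSpace ℝ (Fin p))) : ℝ) = P t
    rw [show (((WithLp.toLp 2 (M.mulVec (N t))) : EuclideanSpace ℝ (Fin p)))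
        = (1 - t) • (((WithLp.toLp 2 (M.mulVec Λ)) : EuclideanSpace ℝ (Fin p)))
          + (t * r) • (((WithLp.toLp 2 (M.mulVec e)) : EuclideanSpace ℝ (Fin p))) by rw [hmv]; rfl]
    simp only [inner_add_left, inner_add_right, real_inner_smul_left,
      real_inner_smul_right, hΛMe, heMΛ, heMe, hle, ← hadef, hP]
    ring
  -- norm squared along N
  have hΛΛ : (inner ℝ Λ Λ : ℝ) = r^2 := real_inner_self_eq_norm_sq Λ
  have hNQ : ∀ t : ℝ, ‖N t‖^2 = Q t := by
    intro t
    rw [← real_inner_self_eq_norm_sq]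
    show (inner ℝ ((1 - t) • Λ + (t * r) • e) ((1 - t) • Λ + (t * r) • e) : ℝ) = Q t
    simp only [inner_add_left, inner_add_right, real_inner_smul_left,
      real_inner_smul_right, hle, hΛΛ, hee, ← hcdef, hQ]
    ring
  -- eventual equality with the rational function
  have hN0 : N 0 = Λ := by simp [hN]
  have hcont : Continuous fun t => ‖N t‖ := by
    apply Continuous.norm
    exact (((continuous_const.sub continuous_id).smul continuous_const).add
      ((continuous_id.mul continuous_const).smul continuous_const))
  have h00 : (0:ℝ) < ‖N 0‖ := by rw [hN0]; exact hr0
  have hev : ∀ᶠ t in nhds (0:ℝ), 0 < ‖N t‖ :=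
    (hcont.continuousAt (x := (0:ℝ))).eventually (eventually_gt_nhds h00)
  have hfg : (fun t : ℝ =>
        (inner ℝ ((r / ‖((1 - t) • Λ + (t * r) • e : EuclideanSpace ℝ (Fin p))‖) •
            ((1 - t) • Λ + (t * r) • e))
          ((WithLp.toLp 2 (M.mulVec ((r / ‖((1 - t) • Λ + (t * r) • e : EuclideanSpace ℝ (Fin p))‖) •
            ((1 - t) • Λ + (t * r) • e))) : EuclideanSpace ℝ (Fin p))) : ℝ))
      =ᶠ[nhds (0:ℝ)] fun t => r^2 * P t / Q t := by
    filter_upwards [hev] with t ht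
    have hn : ‖N t‖ ≠ 0 := ne_of_gt ht
    show (inner ℝ ((r / ‖N t‖) • N t)
        (((WithLp.toLp 2 (M.mulVec ((r / ‖N t‖) • N t))) : EuclideanSpace ℝ (Fin p))) : ℝ) = r^2 * P t / Q t
    have hmv : (M.mulVec ((r / ‖N t‖) • N t) : Fin p → ℝ)
        = (r / ‖N t‖) • (M.mulVec (N t)) := by
      show M.mulVec ((r / ‖N t‖) • (N t : Fin p → ℝ)) = _
      rw [Matrix.mulVec_smul]
    rw [show (((WithLp.toLp 2 (M.mulVec ((r / ‖N t‖) • N t))) : EuclideanSpace ℝ (Fin p)))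
        = (r / ‖N t‖) • (((WithLp.toLp 2 (M.mulVec (N t))) : EuclideanSpace ℝ (Fin p))) by rw [hmv]; rfl]
    rw [real_inner_smul_left, real_inner_smul_right, hBN t, ← hNQ t]
    field_simp
  -- derivative of the rational function
  have hPd : HasDerivAt P (2*r*ρ*c - 2*a) 0 := quad_deriv_aux _ _ _
  have hQd : HasDerivAt Q (2*r*c - 2*r^2) 0 := quad_deriv_aux _ _ _
  have hP0 : P 0 = a := by simp [hP]
  have hQ0 : Q 0 = r^2 := by simp [hQ]
  have hQ0' : Q 0 ≠ 0 := by rw [hQ0]; positivity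
  have hg := (hPd.const_mul (r^2)).div hQd hQ0'
  have hval : (r ^ 2 * (2 * r * ρ * c - 2 * a) * Q 0 - r ^ 2 * P 0 * (2 * r * c - 2 * r ^ 2)) / Q 0 ^ 2
      = -2 * c * (a - ρ * r ^ 2) / r := by
    rw [hP0, hQ0]
    field_simp
    ring
  rw [hval] at hg
  constructor
  · exact hg.congr_of_eventuallyEq hfg
  · apply div_neg_of_neg_of_pos _ hr0
    nlinarith [hpos, hq]
end

section
/- Let n ≥ 2, 1 < β < n + 1, and 1 ≤ k ≤ n. Then as T → +∞, T^(1-β) · ∫_{ℝⁿ} |x_k + T|^β · x_k / (1+|x|²)^(n+1) dx converges to β · ∫_{ℝⁿ} x_k² / (1+|x|²)^(n+1) dx, which is a positive constant. -/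
open MeasureTheory Filter Topology

lemma abs_coord_le {n : ℕ} (x : EuclideanSpace ℝ (Fin n)) (k : Fin n) : |x k| ≤ ‖x‖ := by
  rw [EuclideanSpace.norm_eq, ← Real.sqrt_sq_eq_abs]
  apply Real.sqrt_le_sqrt
  have := Finset.single_le_sum (f := fun i => ‖x i‖ ^ 2) (fun i _ => sq_nonneg _)
    (Finset.mem_univ k)
  simpa [Real.norm_eq_abs, sq_abs] using this

lemma myDivLe {a b c : ℝ} (h : a ≤ b) (hc : 0 < c) : a / c ≤ b / c := by
  gcongr

lemma integrable_aux {n : ℕ} (p : ℝ) (hp : 0 ≤ p) (hpn : p < (n : ℝ) + 2) :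
    Integrable (fun x : EuclideanSpace ℝ (Fin n) => ‖x‖ ^ p / (1 + ‖x‖ ^ 2) ^ (n + 1)) := by
  have hr : ((Module.finrank ℝ (EuclideanSpace ℝ (Fin n))) : ℝ) < (2 * (n + 1) - p) := by
    simp only [finrank_euclideanSpace_fin]
    push_cast
    linarith
  refine ((integrable_one_add_norm (μ := volume) hr).const_mul ((2:ℝ) ^ (n + 1))).mono' ?_ ?_
  · apply Continuous.aestronglyMeasurable
    apply Continuous.div
    · exact continuous_norm.rpow_const (fun x => Or.inr hp)
    · continuity
    · intro x; positivity
  · filter_upwards with x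
    set t := ‖x‖ with ht
    have ht0 : 0 ≤ t := norm_nonneg x
    have h1t : (0:ℝ) < 1 + t := by linarith
    have key : (1 + t) ^ (-(2 * ((n:ℝ) + 1) - p)) =
        (1 + t) ^ p / (1 + t) ^ (2 * (n + 1)) := by
      rw [show -(2 * ((n:ℝ) + 1) - p) = p - (2 * ((n:ℝ) + 1)) by ring,
        Real.rpow_sub h1t]
      congr 1
      rw [show (2 * ((n:ℝ) + 1)) = ((2 * (n + 1) : ℕ) : ℝ) by push_cast; ring,
        Real.rpow_natCast]
    have hb : t ^ p / (1 + t ^ 2) ^ (n + 1) ≤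
        2 ^ (n + 1) * ((1 + t) ^ p / (1 + t) ^ (2 * (n + 1))) := by
      rw [mul_div_assoc']
      rw [div_le_div_iff₀ (by positivity) (by positivity)]
      have h1 : t ^ p ≤ (1 + t) ^ p := Real.rpow_le_rpow ht0 (by linarith) hp
      have h2 : (1 + t) ^ (2 * (n + 1)) ≤ 2 ^ (n + 1) * (1 + t ^ 2) ^ (n + 1) := by
        rw [pow_mul, ← mul_pow]
        apply pow_le_pow_left₀ (by positivity)
        nlinarith [sq_nonneg (1 - t)]
      calc t ^ p * (1 + t) ^ (2 * (n + 1)) ≤ (1 + t) ^ p * (2 ^ (n + 1) * (1 + t ^ 2) ^ (n + 1)) := by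
            apply mul_le_mul h1 h2 (by positivity) (by positivity)
        _ = 2 ^ (n + 1) * (1 + t) ^ p * (1 + t ^ 2) ^ (n + 1) := by ring
    have hnn : 0 ≤ t ^ p / (1 + t ^ 2) ^ (n + 1) := by positivity
    rw [Real.norm_eq_abs, abs_of_nonneg hnn]
    calc t ^ p / (1 + t ^ 2) ^ (n + 1) ≤
        2 ^ (n + 1) * ((1 + t) ^ p / (1 + t) ^ (2 * (n + 1))) := hb
      _ = 2 ^ (n + 1) * (1 + t) ^ (-(2 * ((n:ℝ) + 1) - p)) := by rw [key]

lemma key_limit {β : ℝ} (hβ : 1 < β) (a : ℝ) :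
    Tendsto (fun T : ℝ => T ^ (1 - β) * (|a + T| ^ β - T ^ β)) atTop (𝓝 (β * a)) := by
  rcases eq_or_ne a 0 with rfl | ha
  · rw [show β * 0 = 0 by ring]
    apply Tendsto.congr' _ (tendsto_const_nhds (α := ℝ) (x := 0))
    filter_upwards [eventually_ge_atTop (1:ℝ)] with T hT
    rw [zero_add, abs_of_nonneg (by linarith), sub_self, mul_zero]
  · have hd : HasDerivAt (fun u : ℝ => (1 + u) ^ β) β 0 := by
      have hg : HasDerivAt (fun t : ℝ => t ^ β) (β * (1:ℝ) ^ (β - 1)) 1 :=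
        Real.hasDerivAt_rpow_const (Or.inl one_ne_zero)
      have hf : HasDerivAt (fun u : ℝ => 1 + u) 1 0 := (hasDerivAt_id 0).const_add 1
      have hg' : HasDerivAt (fun t : ℝ => t ^ β) (β * (1:ℝ) ^ (β - 1))
          ((fun u : ℝ => 1 + u) 0) := by simpa using hg
      have := hg'.comp 0 hf
      simp only [Real.one_rpow, mul_one] at this
      exact this
    have hslope : Tendsto (fun u : ℝ => ((1 + u) ^ β - 1) / u) (𝓝[≠] 0) (𝓝 β) := by
      have := hasDerivAt_iff_tendsto_slope.mp hd
      apply this.congr'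
      filter_upwards with u
      simp [slope_def_field, Real.one_rpow]
    have hu : Tendsto (fun T : ℝ => a / T) atTop (𝓝[≠] 0) := by
      apply tendsto_nhdsWithin_of_tendsto_nhds_of_eventually_within
      · exact tendsto_const_nhds.div_atTop tendsto_id
      · filter_upwards [eventually_ge_atTop (1:ℝ)] with T hT
        exact div_ne_zero ha (by linarith)
    have hcomp := (hslope.comp hu).const_mul a
    rw [mul_comm β a]
    apply Tendsto.congr' _ hcomp
    filter_upwards [eventually_gt_atTop (max 1 |a|)] with T hT
    have hT1 : (1:ℝ) < T := lt_of_le_of_lt (le_max_left _ _) hT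
    have hTa : |a| < T := lt_of_le_of_lt (le_max_right _ _) hT
    have hT0 : (0:ℝ) < T := by linarith
    have haT : 0 < a + T := by
      have := neg_abs_le a; linarith
    have h1aT : (0:ℝ) ≤ 1 + a / T := by
      rw [show (1:ℝ) + a / T = (T + a) / T by field_simp]
      exact div_nonneg (by linarith) hT0.le
    have hsplit : |a + T| ^ β = T ^ β * (1 + a / T) ^ β := by
      rw [abs_of_pos haT, ← Real.mul_rpow (le_of_lt hT0) h1aT]
      congr 1
      field_simp
      ring
    have hTT : T ^ (1 - β) * T ^ β = T := by
      rw [← Real.rpow_add hT0]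
      norm_num
    set c := (1 + a / T) ^ β with hc
    have haT' : a / T ≠ 0 := div_ne_zero ha (ne_of_gt hT0)
    calc a * ((fun u : ℝ => ((1 + u) ^ β - 1) / u) ∘ fun T => a / T) T
        = a * ((c - 1) / (a / T)) := rfl
      _ = T * (c - 1) := by field_simp
      _ = T ^ (1 - β) * T ^ β * (c - 1) := by rw [hTT]
      _ = T ^ (1 - β) * (|a + T| ^ β - T ^ β) := by rw [hsplit]; ring

lemma two_rpow_bound {β : ℝ} (hβ : 0 ≤ β) {x y : ℝ} (hx : 0 ≤ x) (hy : 0 ≤ y) :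
    (x + y) ^ β ≤ 2 ^ β * (x ^ β + y ^ β) := by
  have hm : 0 ≤ max x y := le_trans hx (le_max_left _ _)
  have h1 : (x + y) ^ β ≤ (2 * max x y) ^ β := by
    apply Real.rpow_le_rpow (by positivity) _ hβ
    rcases le_total x y with h | h
    · simp [max_eq_right h]; linarith
    · simp [max_eq_left h]; linarith
  have h2 : (2 * max x y) ^ β = 2 ^ β * (max x y) ^ β :=
    Real.mul_rpow (by norm_num) hm
  have h3 : (max x y) ^ β ≤ x ^ β + y ^ β := by
    rcases le_total x y with h | h
    · rw [max_eq_right h]; have := Real.rpow_nonneg hx β; linarith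
    · rw [max_eq_left h]; have := Real.rpow_nonneg hy β; linarith
  calc (x + y) ^ β ≤ 2 ^ β * (max x y) ^ β := by rw [← h2]; exact h1
    _ ≤ 2 ^ β * (x ^ β + y ^ β) := by
        apply mul_le_mul_of_nonneg_left h3 (by positivity)

lemma mvt_rpow {β : ℝ} (hβ : 1 ≤ β) {y x : ℝ} (hy : 0 ≤ y) (hyx : y ≤ x) :
    x ^ β - y ^ β ≤ β * x ^ (β - 1) * (x - y) := by
  have hx : 0 ≤ x := le_trans hy hyx
  have hβ0 : 0 < β := by linarith
  have key : ‖(fun t : ℝ => t ^ β) x - (fun t : ℝ => t ^ β) y‖ ≤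
      β * x ^ (β - 1) * ‖x - y‖ := by
    apply Convex.norm_image_sub_le_of_norm_hasDerivWithin_le
      (f' := fun t : ℝ => β * t ^ (β - 1)) (s := Set.Icc y x)
      (fun t ht => (Real.hasDerivAt_rpow_const (Or.inr hβ)).hasDerivWithinAt)
      _ (convex_Icc y x) (Set.left_mem_Icc.mpr hyx) (Set.right_mem_Icc.mpr hyx)
    intro t ht
    have ht0 : 0 ≤ t := le_trans hy ht.1
    rw [Real.norm_eq_abs,
      abs_of_nonneg (mul_nonneg hβ0.le (Real.rpow_nonneg ht0 _))]
    apply mul_le_mul_of_nonneg_left _ hβ0.le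
    exact Real.rpow_le_rpow ht0 ht.2 (by linarith)
  have key' : |x ^ β - y ^ β| ≤ β * x ^ (β - 1) * |x - y| := by
    simpa [Real.norm_eq_abs] using key
  rw [abs_of_nonneg (sub_nonneg.mpr hyx)] at key'
  exact le_trans (le_abs_self _) key'

lemma bnd {β : ℝ} (hβ : 1 < β) (a T : ℝ) (hT : 1 ≤ T) :
    T ^ (1 - β) * |(|a + T|) ^ β - T ^ β| ≤ β * 2 ^ β * (|a| + |a| ^ β) := by
  have hT0 : (0:ℝ) < T := by linarith
  have hβ0 : (0:ℝ) < β := by linarith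
  set u := |a + T| with hu
  have hu0 : 0 ≤ u := abs_nonneg _
  -- step 1 : |u^β - T^β| ≤ β * (T + |a|)^(β-1) * |a|
  have hdiff : |u - T| ≤ |a| := by
    have h2 := abs_abs_sub_abs_le_abs_sub (a + T) T
    rw [abs_of_pos hT0, add_sub_cancel_right] at h2
    exact h2
  have hmaxle : max u T ≤ T + |a| := by
    apply max_le _ (by linarith [abs_nonneg a])
    calc u = |a + T| := rfl
      _ ≤ |a| + |T| := abs_add_le a T
      _ = T + |a| := by rw [abs_of_pos hT0]; ring
  have step1 : |u ^ β - T ^ β| ≤ β * (T + |a|) ^ (β - 1) * |a| := by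
    rcases le_total u T with h | h
    · rw [abs_of_nonpos (by nlinarith [Real.rpow_le_rpow hu0 h hβ0.le]; )]
      have := mvt_rpow hβ.le hu0 h
      calc -(u ^ β - T ^ β) = T ^ β - u ^ β := by ring
        _ ≤ β * T ^ (β - 1) * (T - u) := this
        _ ≤ β * (T + |a|) ^ (β - 1) * |a| := by
            apply mul_le_mul _ _ (sub_nonneg.mpr h) (by positivity)
            · apply mul_le_mul_of_nonneg_left _ hβ0.le
              exact Real.rpow_le_rpow hT0.le (by linarith [abs_nonneg a]) (by linarith)
            · rw [abs_sub_comm] at hdiff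
              calc T - u ≤ |T - u| := le_abs_self _
                _ ≤ |a| := hdiff
    · rw [abs_of_nonneg (by nlinarith [Real.rpow_le_rpow hT0.le h hβ0.le])]
      have := mvt_rpow hβ.le hT0.le h
      calc u ^ β - T ^ β ≤ β * u ^ (β - 1) * (u - T) := this
        _ ≤ β * (T + |a|) ^ (β - 1) * |a| := by
            apply mul_le_mul _ _ (by linarith) (by positivity)
            · apply mul_le_mul_of_nonneg_left _ hβ0.le
              apply Real.rpow_le_rpow hu0 _ (by linarith)
              calc u ≤ max u T := le_max_left _ _
                _ ≤ T + |a| := hmaxle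
            · calc u - T ≤ |u - T| := le_abs_self _
                _ ≤ |a| := hdiff
  -- step 2 : (T + |a|)^(β-1) ≤ 2^(β-1) * (T^(β-1) + |a|^(β-1))
  have step2 : (T + |a|) ^ (β - 1) ≤ 2 ^ (β - 1) * (T ^ (β - 1) + |a| ^ (β - 1)) :=
    two_rpow_bound (by linarith) hT0.le (abs_nonneg a)
  -- combine
  have hTm : T ^ (1 - β) * T ^ (β - 1) = 1 := by
    rw [← Real.rpow_add hT0]; norm_num
  have hTle1 : T ^ (1 - β) ≤ 1 := by
    apply Real.rpow_le_one_of_one_le_of_nonpos hT (by linarith)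
  have hT1β : 0 ≤ T ^ (1 - β) := Real.rpow_nonneg hT0.le _
  have habsβ : |a| ^ (β - 1) * |a| = |a| ^ β := by
    nth_rewrite 2 [show |a| = |a| ^ (1:ℝ) by rw [Real.rpow_one]]
    rw [← Real.rpow_add' (abs_nonneg a) (show β - 1 + 1 ≠ 0 by simpa using hβ0.ne')]
    norm_num
  have h2pow : (2:ℝ) ^ (β - 1) ≤ 2 ^ β :=
    Real.rpow_le_rpow_of_exponent_le (by norm_num) (by linarith)
  calc T ^ (1 - β) * |u ^ β - T ^ β|
      ≤ T ^ (1 - β) * (β * ((2 ^ (β - 1) * (T ^ (β - 1) + |a| ^ (β - 1)))) * |a|) := by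
        apply mul_le_mul_of_nonneg_left _ hT1β
        refine le_trans step1 ?_
        apply mul_le_mul_of_nonneg_right _ (abs_nonneg a)
        exact mul_le_mul_of_nonneg_left step2 hβ0.le
    _ = β * 2 ^ (β - 1) * (T ^ (1 - β) * T ^ (β - 1) * |a| + (T ^ (1 - β) * (|a| ^ (β - 1) * |a|))) := by
        ring
    _ ≤ β * 2 ^ (β - 1) * (1 * |a| + 1 * (|a| ^ (β - 1) * |a|)) := by
        apply mul_le_mul_of_nonneg_left _ (by positivity)
        rw [hTm]
        have h1 : T ^ (1 - β) * (|a| ^ (β - 1) * |a|) ≤ 1 * (|a| ^ (β - 1) * |a|) :=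
          mul_le_mul_of_nonneg_right hTle1 (by positivity)
        linarith
    _ = β * 2 ^ (β - 1) * (|a| + |a| ^ β) := by rw [habsβ]; ring
    _ ≤ β * 2 ^ β * (|a| + |a| ^ β) := by
        have : 0 ≤ |a| + |a| ^ β := by positivity
        apply mul_le_mul_of_nonneg_right _ this
        exact mul_le_mul_of_nonneg_left h2pow hβ0.le

theorem shifted_integral_asymptotic (n : ℕ) (hn : 2 ≤ n) (β : ℝ) (hβ : 1 < β)
    (hβn : β < (n : ℝ) + 1) (k : Fin n) :
    Tendsto (fun T : ℝ => T ^ (1 - β) *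
        ∫ x : EuclideanSpace ℝ (Fin n),
          |x k + T| ^ β * x k / (1 + ‖x‖ ^ 2) ^ (n + 1))
      atTop
      (𝓝 (β * ∫ x : EuclideanSpace ℝ (Fin n),
          (x k) ^ 2 / (1 + ‖x‖ ^ 2) ^ (n + 1))) ∧
    0 < β * ∫ x : EuclideanSpace ℝ (Fin n),
        (x k) ^ 2 / (1 + ‖x‖ ^ 2) ^ (n + 1) := by
  have hβ0 : (0:ℝ) < β := by linarith
  have hn2 : (2:ℝ) ≤ (n:ℝ) := by exact_mod_cast hn
  set E := EuclideanSpace ℝ (Fin n)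
  have hDpos : ∀ x : E, (0:ℝ) < (1 + ‖x‖ ^ 2) ^ (n + 1) := fun x => by positivity
  have hDne : ∀ x : E, (1 + ‖x‖ ^ 2) ^ (n + 1) ≠ 0 := fun x => (hDpos x).ne'
  have hcontD : Continuous (fun x : E => (1 + ‖x‖ ^ 2) ^ (n + 1)) := by continuity
  have hc : Continuous (fun x : E => x k) := (EuclideanSpace.proj k).continuous
  have hrpow_two : ∀ x : E, ‖x‖ ^ (2:ℝ) = ‖x‖ ^ 2 := fun x => by
    rw [show (2:ℝ) = ((2:ℕ):ℝ) by norm_num, Real.rpow_natCast]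
  -- the dominating function
  set G : E → ℝ := fun x => β * 2 ^ β *
    (‖x‖ ^ (2:ℝ) / (1 + ‖x‖ ^ 2) ^ (n + 1) + ‖x‖ ^ (β + 1) / (1 + ‖x‖ ^ 2) ^ (n + 1)) with hGdef
  have hG_int : Integrable G :=
    ((integrable_aux 2 (by norm_num) (by linarith)).add
      (integrable_aux (β + 1) (by linarith) (by push_cast; linarith))).const_mul _
  -- the auxiliary family
  set F : ℝ → E → ℝ := fun T x =>
    T ^ (1 - β) * ((|x k + T| ^ β - T ^ β) * x k / (1 + ‖x‖ ^ 2) ^ (n + 1)) with hFdef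
  have hF_bound : ∀ T : ℝ, 1 ≤ T → ∀ x : E, |F T x| ≤ G x := by
    intro T hT x
    have hD := hDpos x
    have hTnn : (0:ℝ) ≤ T ^ (1 - β) := Real.rpow_nonneg (by linarith) _
    have hco := abs_coord_le x k
    have h1 : |x k| * |x k| ≤ ‖x‖ ^ (2:ℝ) := by
      rw [hrpow_two x]
      calc |x k| * |x k| = |x k| ^ 2 := (pow_two _).symm
        _ ≤ ‖x‖ ^ 2 := by
            apply pow_le_pow_left₀ (abs_nonneg _) hco
    have h2 : |x k| ^ β * |x k| ≤ ‖x‖ ^ (β + 1) := by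
      rw [Real.rpow_add' (norm_nonneg x) (by positivity : β + 1 ≠ 0), Real.rpow_one]
      exact mul_le_mul (Real.rpow_le_rpow (abs_nonneg _) hco hβ0.le) hco (abs_nonneg _)
        (Real.rpow_nonneg (norm_nonneg x) _)
    calc |F T x| = (T ^ (1 - β) * |(|x k + T| ^ β - T ^ β)|) *
          (|x k| / (1 + ‖x‖ ^ 2) ^ (n + 1)) := by
          rw [hFdef]
          simp only []
          rw [abs_mul, abs_div, abs_mul, abs_of_pos hD, abs_of_nonneg hTnn]
          ring
      _ ≤ (β * 2 ^ β * (|x k| + |x k| ^ β)) * (|x k| / (1 + ‖x‖ ^ 2) ^ (n + 1)) := by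
          apply mul_le_mul_of_nonneg_right (bnd hβ (x k) T hT) (by positivity)
      _ = β * 2 ^ β * ((|x k| * |x k|) / (1 + ‖x‖ ^ 2) ^ (n + 1) +
            (|x k| ^ β * |x k|) / (1 + ‖x‖ ^ 2) ^ (n + 1)) := by ring
      _ ≤ G x := by
          rw [hGdef]
          apply mul_le_mul_of_nonneg_left _ (by positivity)
          exact add_le_add (myDivLe h1 hD) (myDivLe h2 hD)
  have hF_meas : ∀ T : ℝ, AEStronglyMeasurable (F T) volume := by
    intro T
    apply Continuous.aestronglyMeasurable
    apply Continuous.mul continuous_const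
    apply Continuous.div _ hcontD hDne
    exact (((hc.add continuous_const).abs.rpow_const (fun x => Or.inr hβ0.le)).sub
      continuous_const).mul hc
  -- integrability of ψ and its vanishing integral
  set ψ : E → ℝ := fun x => x k / (1 + ‖x‖ ^ 2) ^ (n + 1) with hψdef
  have hψ_meas : AEStronglyMeasurable ψ volume :=
    (hc.div hcontD hDne).aestronglyMeasurable
  have hψ_int : Integrable ψ := by
    refine (integrable_aux 1 (by norm_num) (by linarith)).mono' hψ_meas ?_
    filter_upwards with x
    rw [hψdef]
    simp only []
    rw [Real.norm_eq_abs, abs_div, abs_of_pos (hDpos x), Real.rpow_one]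
    exact myDivLe (abs_coord_le x k) (hDpos x)
  have hψ0 : ∫ x : E, ψ x = 0 := by
    have h1 : ∫ x : E, ψ (-x) = ∫ x : E, ψ x := integral_neg_eq_self ψ volume
    have h2 : ∀ x : E, ψ (-x) = -ψ x := by
      intro x
      simp only [hψdef, norm_neg]
      rw [show (-x) k = -(x k) from rfl]
      ring
    simp only [h2, integral_neg] at h1
    linarith
  -- integrability of H T
  have hH_int : ∀ T : ℝ, 1 ≤ T →
      Integrable (fun x : E => (|x k + T| ^ β - T ^ β) * x k / (1 + ‖x‖ ^ 2) ^ (n + 1)) := by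
    intro T hT
    have hT0 : (0:ℝ) < T := by linarith
    refine (hG_int.const_mul (T ^ (β - 1))).mono' ?_ ?_
    · apply Continuous.aestronglyMeasurable
      apply Continuous.div _ hcontD hDne
      exact (((hc.add continuous_const).abs.rpow_const (fun x => Or.inr hβ0.le)).sub
        continuous_const).mul hc
    · filter_upwards with x
      have e1 : T ^ (β - 1) * T ^ (1 - β) = 1 := by
        rw [← Real.rpow_add hT0]; norm_num
      have e2 : ‖(|x k + T| ^ β - T ^ β) * x k / (1 + ‖x‖ ^ 2) ^ (n + 1)‖
          = T ^ (β - 1) * |F T x| := by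
        rw [hFdef]
        simp only []
        rw [Real.norm_eq_abs, abs_mul, abs_of_nonneg (Real.rpow_nonneg hT0.le _),
          ← mul_assoc, e1, one_mul]
      rw [e2]
      exact mul_le_mul_of_nonneg_left (hF_bound T hT x) (Real.rpow_nonneg hT0.le _)
  -- the key integral identity
  have hstep : ∀ T : ℝ, 1 ≤ T →
      T ^ (1 - β) * (∫ x : E, |x k + T| ^ β * x k / (1 + ‖x‖ ^ 2) ^ (n + 1))
        = ∫ x : E, F T x := by
    intro T hT
    calc T ^ (1 - β) * (∫ x : E, |x k + T| ^ β * x k / (1 + ‖x‖ ^ 2) ^ (n + 1))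
        = T ^ (1 - β) * (∫ x : E, ((|x k + T| ^ β - T ^ β) * x k / (1 + ‖x‖ ^ 2) ^ (n + 1)
            + T ^ β * ψ x)) := by
          congr 1
          apply integral_congr_ae
          filter_upwards with x
          rw [hψdef]
          simp only []
          ring
      _ = T ^ (1 - β) * ((∫ x : E, (|x k + T| ^ β - T ^ β) * x k / (1 + ‖x‖ ^ 2) ^ (n + 1))
            + T ^ β * ∫ x : E, ψ x) := by
          rw [integral_add (hH_int T hT) (hψ_int.const_mul _), integral_const_mul]
      _ = T ^ (1 - β) * ∫ x : E, (|x k + T| ^ β - T ^ β) * x k / (1 + ‖x‖ ^ 2) ^ (n + 1) := by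
          rw [hψ0, mul_zero, add_zero]
      _ = ∫ x : E, F T x := (integral_const_mul _ _).symm
  -- pointwise limit
  have hptlim : ∀ x : E, Tendsto (fun T : ℝ => F T x) atTop
      (𝓝 (β * ((x k) ^ 2 / (1 + ‖x‖ ^ 2) ^ (n + 1)))) := by
    intro x
    have h := (key_limit hβ (x k)).mul_const ((x k) / (1 + ‖x‖ ^ 2) ^ (n + 1))
    rw [show β * (x k) * (x k / (1 + ‖x‖ ^ 2) ^ (n + 1))
        = β * ((x k) ^ 2 / (1 + ‖x‖ ^ 2) ^ (n + 1)) by ring] at h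
    apply h.congr
    intro T
    rw [hFdef]
    simp only []
    ring
  -- dominated convergence
  have hDCT : Tendsto (fun T : ℝ => ∫ x : E, F T x) atTop
      (𝓝 (∫ x : E, β * ((x k) ^ 2 / (1 + ‖x‖ ^ 2) ^ (n + 1)))) := by
    apply tendsto_integral_filter_of_dominated_convergence G
    · exact Eventually.of_forall hF_meas
    · filter_upwards [eventually_ge_atTop (1:ℝ)] with T hT
      filter_upwards with x
      rw [Real.norm_eq_abs]
      exact hF_bound T hT x
    · exact hG_int
    · exact Eventually.of_forall (fun x => hptlim x)
  -- positivity
  have hf₀_int : Integrable (fun x : E => (x k) ^ 2 / (1 + ‖x‖ ^ 2) ^ (n + 1)) := by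
    refine (integrable_aux 2 (by norm_num) (by linarith)).mono' ?_ ?_
    · exact ((hc.pow 2).div hcontD hDne).aestronglyMeasurable
    · filter_upwards with x
      rw [Real.norm_eq_abs, abs_div, abs_of_pos (hDpos x), hrpow_two x, abs_pow]
      apply myDivLe _ (hDpos x)
      exact pow_le_pow_left₀ (abs_nonneg _) (abs_coord_le x k) 2
  have hsupp : (fun x : E => x k) ⁻¹' ({0}ᶜ) ⊆
      Function.support (fun x : E => (x k) ^ 2 / (1 + ‖x‖ ^ 2) ^ (n + 1)) := by
    intro x hx
    have hx' : x k ≠ 0 := hx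
    exact div_ne_zero (pow_ne_zero 2 hx') (hDne x)
  have hvol : (0 : ENNReal) < volume ((fun x : E => x k) ⁻¹' ({0}ᶜ)) :=
    (isOpen_compl_singleton.preimage hc).measure_pos volume
      ⟨EuclideanSpace.single k 1, by simp [EuclideanSpace.single_apply]⟩
  have hpos : 0 < ∫ x : E, (x k) ^ 2 / (1 + ‖x‖ ^ 2) ^ (n + 1) := by
    rw [MeasureTheory.integral_pos_iff_support_of_nonneg (fun x => by positivity) hf₀_int]
    exact lt_of_lt_of_le hvol (measure_mono hsupp)
  refine ⟨?_, mul_pos hβ0 hpos⟩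
  have hfinal : (fun T : ℝ => ∫ x : E, F T x) =ᶠ[atTop]
      (fun T : ℝ => T ^ (1 - β) *
        ∫ x : E, |x k + T| ^ β * x k / (1 + ‖x‖ ^ 2) ^ (n + 1)) := by
    filter_upwards [eventually_ge_atTop (1:ℝ)] with T hT
    exact (hstep T hT).symm
  have := hDCT.congr' hfinal
  rwa [integral_const_mul] at this
end
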